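/- Suppose for each Bell state Ψ ∈ {φ⁺,φ⁻,ψ⁺,ψ⁻} and each outcome λ in a finite index set Λ_Ψ we have product Kraus operators K_A^{λ,Ψ} ⊗ K_B^{λ,Ψ} on ℂ²⊗ℂ², such that the families {K_A^{λ,Ψ}}, {K_B^{λ,Ψ}} over all (Ψ,λ) each satisfy the completeness relation Σ K† K = I. Then the winning probability p_win = (1/4) Σ_Ψ Σ_{λ∈Λ_Ψ} |⟨Ψ| K_A^{λ,Ψ} ⊗ K_B^{λ,Ψ} |Ψ⟩|² is at most 1/4. -/

import Mathlib

open Kronecker Matrix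

/-- Bell state `|φ⁺⟩ = (|00⟩ + |11⟩)/√2`. -/
noncomputable def phiP : Fin 2 × Fin 2 → ℂ := fun p =>
  if p.1 = p.2 then (Real.sqrt 2 : ℂ)⁻¹ else 0

/-- Bell state `|φ⁻⟩ = (|00⟩ - |11⟩)/√2`. -/
noncomputable def phiM : Fin 2 × Fin 2 → ℂ := fun p =>
  if p = (0, 0) then (Real.sqrt 2 : ℂ)⁻¹ else if p = (1, 1) then -(Real.sqrt 2 : ℂ)⁻¹ else 0

/-- Bell state `|ψ⁺⟩ = (|01⟩ + |10⟩)/√2`. -/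
noncomputable def psiP : Fin 2 × Fin 2 → ℂ := fun p =>
  if p.1 ≠ p.2 then (Real.sqrt 2 : ℂ)⁻¹ else 0

/-- Bell state `|ψ⁻⟩ = (|01⟩ - |10⟩)/√2`. -/
noncomputable def psiM : Fin 2 × Fin 2 → ℂ := fun p =>
  if p = (0, 1) then (Real.sqrt 2 : ℂ)⁻¹ else if p = (1, 0) then -(Real.sqrt 2 : ℂ)⁻¹ else 0

/-- The four Bell states, indexed by `Fin 4`. -/
noncomputable def bell : Fin 4 → (Fin 2 × Fin 2 → ℂ) := ![phiP, phiM, psiP, psiM]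

/-- Frobenius norm squared of a 2×2 complex matrix. -/
noncomputable def fnorm (A : Matrix (Fin 2) (Fin 2) ℂ) : ℝ :=
  ∑ j : Fin 2, ∑ k : Fin 2, Complex.normSq (A j k)

lemma fnorm_nonneg (A : Matrix (Fin 2) (Fin 2) ℂ) : 0 ≤ fnorm A := by
  refine Finset.sum_nonneg fun j _ => Finset.sum_nonneg fun k _ => Complex.normSq_nonneg _

lemma sqrt2 : ((Real.sqrt 2 : ℂ))⁻¹ * ((Real.sqrt 2 : ℂ))⁻¹ = (2:ℂ)⁻¹ := by
  rw [← mul_inv]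
  norm_cast
  rw [Real.mul_self_sqrt (by norm_num)]
  norm_num

lemma normSq_half : Complex.normSq ((2:ℂ)⁻¹) = 4⁻¹ := by
  rw [Complex.normSq_inv]
  norm_num [Complex.normSq]

/-- Cauchy–Schwarz over the four index pairs. -/
lemma cs4 (a b : Fin 2 × Fin 2 → ℂ) :
    Complex.normSq (∑ p : Fin 2 × Fin 2, a p * b p) ≤
      (∑ p : Fin 2 × Fin 2, Complex.normSq (a p)) * (∑ p : Fin 2 × Fin 2, Complex.normSq (b p)) := by
  have h1 : ‖(∑ p : Fin 2 × Fin 2, a p * b p)‖ ≤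
      ∑ p : Fin 2 × Fin 2, ‖(a p)‖ * ‖(b p)‖ := by
    refine (norm_sum_le _ _).trans_eq ?_
    simp [norm_mul]
  have h2 := Finset.sum_mul_sq_le_sq_mul_sq Finset.univ (fun p => ‖(a p)‖)
      (fun p => ‖(b p)‖)
  calc Complex.normSq (∑ p : Fin 2 × Fin 2, a p * b p)
      = (‖(∑ p : Fin 2 × Fin 2, a p * b p)‖) ^ 2 := (Complex.sq_norm _).symm
    _ ≤ (∑ p : Fin 2 × Fin 2, ‖(a p)‖ * ‖(b p)‖) ^ 2 := by
        exact pow_le_pow_left₀ (norm_nonneg _) h1 2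
    _ ≤ (∑ p : Fin 2 × Fin 2, ‖(a p)‖ ^ 2) * (∑ p : Fin 2 × Fin 2, ‖(b p)‖ ^ 2) := h2
    _ = _ := by simp [Complex.sq_norm]

lemma term_bound (A B : Matrix (Fin 2) (Fin 2) ℂ) (i : Fin 4) :
    Complex.normSq (star (bell i) ⬝ᵥ (A ⊗ₖ B).mulVec (bell i)) ≤
      1 / 4 * (fnorm A * fnorm B) := by
  have key : ∀ (a b : Fin 2 × Fin 2 → ℂ),
      star (bell i) ⬝ᵥ (A ⊗ₖ B).mulVec (bell i) = (2:ℂ)⁻¹ * ∑ p : Fin 2 × Fin 2, a p * b p →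
      (∑ p : Fin 2 × Fin 2, Complex.normSq (a p)) = fnorm A →
      (∑ p : Fin 2 × Fin 2, Complex.normSq (b p)) = fnorm B →
      Complex.normSq (star (bell i) ⬝ᵥ (A ⊗ₖ B).mulVec (bell i)) ≤ 1 / 4 * (fnorm A * fnorm B) := by
    intro a b h ha hb
    rw [h, Complex.normSq_mul, normSq_half]
    have := cs4 a b
    rw [ha, hb] at this
    linarith
  fin_cases i
  · refine key (fun p => A p.1 p.2) (fun p => B p.1 p.2) ?_ ?_ ?_
    · simp [bell, phiP, dotProduct, mulVec, Fintype.sum_prod_type, Fin.sum_univ_two,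
        kroneckerMap_apply, ← sqrt2]
      ring
    · simp [fnorm, Fintype.sum_prod_type]
    · simp [fnorm, Fintype.sum_prod_type]
  · refine key (fun p => (if p.1 = p.2 then 1 else -1) * A p.1 p.2) (fun p => B p.1 p.2) ?_ ?_ ?_
    · simp [bell, phiM, dotProduct, mulVec, Fintype.sum_prod_type, Fin.sum_univ_two,
        kroneckerMap_apply, Prod.ext_iff, ← sqrt2]
      ring
    · simp [fnorm, Fintype.sum_prod_type]
    · simp [fnorm, Fintype.sum_prod_type]
  · refine key (fun p => A p.1 p.2) (fun p => B (p.1 + 1) (p.2 + 1)) ?_ ?_ ?_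
    · simp [bell, psiP, dotProduct, mulVec, Fintype.sum_prod_type, Fin.sum_univ_two,
        kroneckerMap_apply, ← sqrt2]
      ring
    · simp [fnorm, Fintype.sum_prod_type]
    · simp [fnorm, Fintype.sum_prod_type]
      ring
  · refine key (fun p => (if p.1 = p.2 then 1 else -1) * A p.1 p.2)
      (fun p => B (p.1 + 1) (p.2 + 1)) ?_ ?_ ?_
    · simp [bell, psiM, dotProduct, mulVec, Fintype.sum_prod_type, Fin.sum_univ_two,
        kroneckerMap_apply, Prod.ext_iff, ← sqrt2]
      ring
    · simp [fnorm, Fintype.sum_prod_type]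
    · simp [fnorm, Fintype.sum_prod_type]
      ring

lemma trace_eq (A : Matrix (Fin 2) (Fin 2) ℂ) : Matrix.trace (Aᴴ * A) = (fnorm A : ℂ) := by
  simp only [Matrix.trace, Matrix.diag, Matrix.mul_apply, Matrix.conjTranspose_apply, fnorm]
  push_cast
  rw [Finset.sum_comm]
  congr 1; ext j; congr 1; ext k
  rw [Complex.normSq_eq_conj_mul_self]
  rfl

/-- Theorem 1: nondestructive discrimination of all four Bell states between two
distant parties using local (product) Kraus operations succeeds with probability
at most `1/4`.  For each Bell state `Ψ` (indexed by `Fin 4`) and each outcome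
`λ` in a finite set `Λ Ψ`, the parties apply `K_A^{λ,Ψ} ⊗ K_B^{λ,Ψ}`; both local
families satisfy the completeness relation `Σ K† K = I`. -/
theorem nondestructive_bell_discrimination_LOCC_bound
    (Λ : Fin 4 → Type) [∀ i, Fintype (Λ i)]
    (KA KB : ∀ i : Fin 4, Λ i → Matrix (Fin 2) (Fin 2) ℂ)
    (hA : (∑ i : Fin 4, ∑ l : Λ i, (KA i l)ᴴ * KA i l) = 1)
    (hB : (∑ i : Fin 4, ∑ l : Λ i, (KB i l)ᴴ * KB i l) = 1) :
    (1 / 4 : ℝ) * ∑ i : Fin 4, ∑ l : Λ i,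
        Complex.normSq (star (bell i) ⬝ᵥ ((KA i l) ⊗ₖ (KB i l)).mulVec (bell i)) ≤
      1 / 4 := by
  have sumA : (∑ i : Fin 4, ∑ l : Λ i, fnorm (KA i l)) = 2 := by
    have hc : (((∑ i : Fin 4, ∑ l : Λ i, fnorm (KA i l)) : ℝ) : ℂ) = 2 := by
      push_cast
      calc (∑ i : Fin 4, ∑ l : Λ i, ((fnorm (KA i l) : ℝ) : ℂ))
          = ∑ i : Fin 4, ∑ l : Λ i, Matrix.trace ((KA i l)ᴴ * KA i l) := by
            simp [trace_eq]
        _ = Matrix.trace (∑ i : Fin 4, ∑ l : Λ i, (KA i l)ᴴ * KA i l) := by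
            simp [Matrix.trace_sum]
        _ = 2 := by rw [hA]; simp [Matrix.trace_one]
    exact_mod_cast hc
  have sumB : (∑ i : Fin 4, ∑ l : Λ i, fnorm (KB i l)) = 2 := by
    have hc : (((∑ i : Fin 4, ∑ l : Λ i, fnorm (KB i l)) : ℝ) : ℂ) = 2 := by
      push_cast
      calc (∑ i : Fin 4, ∑ l : Λ i, ((fnorm (KB i l) : ℝ) : ℂ))
          = ∑ i : Fin 4, ∑ l : Λ i, Matrix.trace ((KB i l)ᴴ * KB i l) := by
            simp [trace_eq]
        _ = Matrix.trace (∑ i : Fin 4, ∑ l : Λ i, (KB i l)ᴴ * KB i l) := by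
            simp [Matrix.trace_sum]
        _ = 2 := by rw [hB]; simp [Matrix.trace_one]
    exact_mod_cast hc
  have step1 : (∑ i : Fin 4, ∑ l : Λ i,
        Complex.normSq (star (bell i) ⬝ᵥ ((KA i l) ⊗ₖ (KB i l)).mulVec (bell i))) ≤
      ∑ i : Fin 4, ∑ l : Λ i, 1 / 4 * (fnorm (KA i l) * fnorm (KB i l)) := by
    refine Finset.sum_le_sum fun i _ => Finset.sum_le_sum fun l _ => term_bound _ _ i
  have step2 : (∑ i : Fin 4, ∑ l : Λ i, fnorm (KA i l) * fnorm (KB i l)) ≤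
      (∑ i : Fin 4, ∑ l : Λ i, fnorm (KA i l)) * (∑ i : Fin 4, ∑ l : Λ i, fnorm (KB i l)) := by
    rw [Finset.sum_mul]
    refine Finset.sum_le_sum fun i _ => ?_
    rw [Finset.sum_mul]
    refine Finset.sum_le_sum fun l _ => ?_
    refine mul_le_mul_of_nonneg_left ?_ (fnorm_nonneg _)
    calc fnorm (KB i l) ≤ ∑ l' : Λ i, fnorm (KB i l') :=
          Finset.single_le_sum (f := fun l' => fnorm (KB i l'))
            (fun l' _ => fnorm_nonneg _) (Finset.mem_univ l)
      _ ≤ ∑ i' : Fin 4, ∑ l' : Λ i', fnorm (KB i' l') :=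
          Finset.single_le_sum (f := fun i' => ∑ l' : Λ i', fnorm (KB i' l'))
            (fun i' _ => Finset.sum_nonneg fun l' _ => fnorm_nonneg _) (Finset.mem_univ i)
  have key : (∑ i : Fin 4, ∑ l : Λ i, 1 / 4 * (fnorm (KA i l) * fnorm (KB i l))) ≤ 1 := by
    have h4 : (∑ i : Fin 4, ∑ l : Λ i, fnorm (KA i l) * fnorm (KB i l)) ≤ 4 := by
      calc (∑ i : Fin 4, ∑ l : Λ i, fnorm (KA i l) * fnorm (KB i l))
          ≤ (∑ i : Fin 4, ∑ l : Λ i, fnorm (KA i l)) * (∑ i : Fin 4, ∑ l : Λ i, fnorm (KB i l)) := step2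
        _ = 4 := by rw [sumA, sumB]; norm_num
    calc (∑ i : Fin 4, ∑ l : Λ i, 1 / 4 * (fnorm (KA i l) * fnorm (KB i l)))
        = 1 / 4 * (∑ i : Fin 4, ∑ l : Λ i, fnorm (KA i l) * fnorm (KB i l)) := by
          simp [Finset.mul_sum]
      _ ≤ 1 / 4 * 4 := by linarith
      _ = 1 := by norm_num
  have hS := step1.trans key
  linarith
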